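/- Assume that E is cofinal (for every v ∈ V and every infinite path z ∈ Z there exists n and a finite path from v to r(z_n)) and that for every v ∈ V and every w ∈ V_∞ there is a finite path from v to w. Then the path groupoid is minimal: the only nonempty open subset of X that is invariant under tail equivalence is X itself. -/

import Mathlib

namespace GraphCstar

/-- A directed graph: vertices, edges, source and range maps. -/
structure Graph where
  V : Type
  Ed : Type
  src : Ed → V
  rng : Ed → V

variable (G : Graph)

/-- Validity of a list of edges as a path starting at vertex `v`. -/
def Valid : G.V → List G.Ed → Prop
  | _, [] => True
  | v, e :: l => G.src e = v ∧ Valid (G.rng e) l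

/-- Terminal vertex of a list of edges starting at `v`. -/
def rngTo : G.V → List G.Ed → G.V
  | v, [] => v
  | _, e :: l => rngTo (G.rng e) l

theorem valid_append (l₁ l₂ : List G.Ed) (v : G.V) :
    Valid G v (l₁ ++ l₂) ↔ Valid G v l₁ ∧ Valid G (rngTo G v l₁) l₂ := by
  induction l₁ generalizing v with
  | nil => simp [Valid, rngTo]
  | cons e l ih => simp [Valid, rngTo, ih, and_assoc]

theorem rngTo_append (l₁ l₂ : List G.Ed) (v : G.V) :
    rngTo G v (l₁ ++ l₂) = rngTo G (rngTo G v l₁) l₂ := by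
  induction l₁ generalizing v with
  | nil => rfl
  | cons e l ih => simp [rngTo, ih]

theorem valid_drop {v : G.V} {l : List G.Ed} (n : ℕ) (h : Valid G v l) :
    Valid G (rngTo G v (l.take n)) (l.drop n) := by
  have h' : Valid G v (l.take n ++ l.drop n) := by
    rw [List.take_append_drop]; exact h
  exact ((valid_append G _ _ _).mp h').2

/-- A finite path in the graph `G`; vertices are the paths of length `0`. -/
structure FinPath where
  start : G.V
  edges : List G.Ed
  valid : Valid G start edges

namespace FinPath

variable {G}

/-- The terminal vertex (range) of a finite path. -/
def rngF (α : FinPath G) : G.V := rngTo G α.start α.edges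

/-- The length of a finite path. -/
def len (α : FinPath G) : ℕ := α.edges.length

/-- The finite path of length `0` at the vertex `v`. -/
def vp (v : G.V) : FinPath G := ⟨v, [], trivial⟩

/-- The finite path consisting of the single edge `e`. -/
def ep (e : G.Ed) : FinPath G := ⟨G.src e, [e], ⟨rfl, trivial⟩⟩

/-- Concatenation of finite paths. -/
def concat (α β : FinPath G) (h : β.start = α.rngF) : FinPath G :=
  ⟨α.start, α.edges ++ β.edges,
    (valid_append G _ _ _).mpr
      ⟨α.valid, by
        show Valid G α.rngF β.edges
        rw [← h]; exact β.valid⟩⟩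

theorem rngF_concat (α β : FinPath G) (h : β.start = α.rngF) :
    (α.concat β h).rngF = β.rngF := by
  show rngTo G α.start (α.edges ++ β.edges) = _
  rw [rngTo_append]
  show rngTo G α.rngF β.edges = _
  rw [← h]; rfl

end FinPath

/-- `α` is an initial segment of `β`. -/
def IsPref (α β : FinPath G) : Prop := α.start = β.start ∧ α.edges <+: β.edges

/-- The "remainder" path: if `α` is an initial segment of `β`, the path `μ` with
`β = αμ` (for other inputs the value is junk). -/
def diff (α β : FinPath G) : FinPath G :=
  ⟨rngTo G β.start (β.edges.take α.edges.length),
    β.edges.drop α.edges.length, valid_drop G _ β.valid⟩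

open Classical in
/-- Totalized concatenation of finite paths (junk value when endpoints do not match). -/
noncomputable def catP (α β : FinPath G) : FinPath G :=
  if h : β.start = α.rngF then α.concat β h else α

open Classical in
/-- The product on `T = {(α,β) ∈ Y × Y : r(α) = r(β)} ∪ {z}`, with `z` encoded as `none`. -/
noncomputable def mulT :
    Option (FinPath G × FinPath G) → Option (FinPath G × FinPath G) →
      Option (FinPath G × FinPath G)
  | none, _ => none
  | _, none => none
  | some (α₁, β₁), some (α₂, β₂) =>
    if IsPref G β₁ α₂ then some (catP G α₁ (diff G β₁ α₂), β₂)
    else if IsPref G α₂ β₁ then some (α₁, catP G β₂ (diff G α₂ β₁))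
    else none

/-- The involution on `T`. -/
def starT :
    Option (FinPath G × FinPath G) → Option (FinPath G × FinPath G)
  | none => none
  | some (α, β) => some (β, α)

/-- The subset of `Option (FinPath G × FinPath G)` corresponding to
`T = {(α,β) : r(α) = r(β)} ∪ {z}`. -/
def TsetT : Set (Option (FinPath G × FinPath G)) :=
  {t | ∀ α β : FinPath G, t = some (α, β) → α.rngF = β.rngF}

/-- An infinite path in the graph `G`. -/
structure InfPath where
  seq : ℕ → G.Ed
  valid : ∀ i, G.src (seq (i + 1)) = G.rng (seq i)

/-- The initial vertex of an infinite path. -/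
def InfPath.start {G : Graph} (z : InfPath G) : G.V := G.src (z.seq 0)

/-- Prepending an edge to an infinite path. -/
def consInf (e : G.Ed) (z : InfPath G) (h : z.start = G.rng e) : InfPath G where
  seq := fun n =>
    match n with
    | 0 => e
    | m + 1 => z.seq m
  valid := fun i =>
    match i with
    | 0 => h
    | m + 1 => z.valid m

/-- Prepending a finite edge list to an infinite path (with the starting vertex recorded). -/
def appendInfAux :
    (l : List G.Ed) → (v : G.V) → Valid G v l → (z : InfPath G) →
      z.start = rngTo G v l → {w : InfPath G // w.start = v}
  | [], _, _, z, h => ⟨z, h⟩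
  | e :: l, v, hv, z, h =>
    let w := appendInfAux l (G.rng e) hv.2 z h
    ⟨consInf G e w.1 w.2, hv.1⟩

/-- Concatenation of a finite path with an infinite path. -/
def FinPath.concatInf {G : Graph} (α : FinPath G) (z : InfPath G)
    (h : z.start = α.rngF) : InfPath G :=
  (appendInfAux G α.edges α.start α.valid z h).1

/-- The path space `Y ∪ Z` of all finite and infinite paths. -/
def PathSp := FinPath G ⊕ InfPath G

/-- The initial vertex of a (finite or infinite) path. -/
def startOf : PathSp G → G.V
  | .inl α => α.start
  | .inr z => z.start

/-- The length of a path, in `ℕ∞`. -/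
def lenOf : PathSp G → ℕ∞
  | .inl α => (α.edges.length : ℕ∞)
  | .inr _ => ⊤

/-- The `i`-th edge (0-indexed) of a path, if it exists. -/
def nthEdge : PathSp G → ℕ → Option G.Ed
  | .inl α, i => α.edges[i]?
  | .inr z, i => some (z.seq i)

/-- `x = αγ` for some (finite or infinite, possibly length `0`) path `γ`;
that is, `α` is an initial segment of `x`, i.e. `x ∈ D_α`. -/
def Ext (α : FinPath G) (x : PathSp G) : Prop :=
  (∃ (β : FinPath G) (h : β.start = α.rngF), x = .inl (α.concat β h)) ∨
  (∃ (w : InfPath G) (h : w.start = α.rngF), x = .inr (α.concatInf w h))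

/-- The basic set `D_α ⊆ Y ∪ Z`. -/
def Dset (α : FinPath G) : Set (PathSp G) := {x | Ext G α x}

/-- The topology on the path space, generated by the sets `D_α` and their complements. -/
def pathTop : TopologicalSpace (PathSp G) :=
  .generateFrom (Set.range (Dset G) ∪ Set.range fun α => (Dset G α)ᶜ)

/-- The vertex `v` emits infinitely many edges. -/
def Vinf (v : G.V) : Prop := {e | G.src e = v}.Infinite

/-- Membership in `X = Y_∞ ∪ Z`. -/
def memX : PathSp G → Prop
  | .inl α => Vinf G α.rngF
  | .inr _ => True

/-- The set `X = Y_∞ ∪ Z`. -/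
def Xset : Set (PathSp G) := {x | memX G x}

/-- Tail equivalence of paths: `x = αγ` and `y = βγ` for finite paths `α, β`
and a common (finite or infinite) path `γ`. -/
def TailEq (x y : PathSp G) : Prop :=
  (∃ (α β γ : FinPath G) (h₁ : γ.start = α.rngF) (h₂ : γ.start = β.rngF),
      x = .inl (α.concat γ h₁) ∧ y = .inl (β.concat γ h₂)) ∨
  (∃ (α β : FinPath G) (w : InfPath G) (h₁ : w.start = α.rngF)
      (h₂ : w.start = β.rngF),
      x = .inr (α.concatInf w h₁) ∧ y = .inr (β.concatInf w h₂))

/-- A subset of the path space is invariant (a union of tail-equivalence classes). -/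
def InvariantS (F : Set (PathSp G)) : Prop :=
  ∀ x ∈ F, ∀ y, TailEq G x y → y ∈ F

/-- Membership `(x, k, y) ∈ G` for the path groupoid: `x = αγ`, `y = βγ` and
`k = l(α) - l(β)`. -/
def InG (x : PathSp G) (k : ℤ) (y : PathSp G) : Prop :=
  (∃ (α β γ : FinPath G) (h₁ : γ.start = α.rngF) (h₂ : γ.start = β.rngF),
      x = .inl (α.concat γ h₁) ∧ y = .inl (β.concat γ h₂) ∧
        k = (α.len : ℤ) - (β.len : ℤ)) ∨
  (∃ (α β : FinPath G) (w : InfPath G) (h₁ : w.start = α.rngF)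
      (h₂ : w.start = β.rngF),
      x = .inr (α.concatInf w h₁) ∧ y = .inr (β.concatInf w h₂) ∧
        k = (α.len : ℤ) - (β.len : ℤ))

/-- There is a finite path from `u` to `w`. -/
def Reach (u w : G.V) : Prop := ∃ β : FinPath G, β.start = u ∧ β.rngF = w

/-- A loop based at the vertex `v`. -/
def LoopAt (v : G.V) (α : FinPath G) : Prop :=
  α.edges ≠ [] ∧ α.start = v ∧ α.rngF = v ∧
    ∀ i e, i + 1 < α.edges.length → α.edges[i]? = some e → G.rng e ≠ v

/-- Condition (K): no vertex has exactly one loop based at it. -/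
def CondK : Prop := ¬ ∃ v : G.V, ∃! α : FinPath G, LoopAt G v α

/-- A point of the path space has trivial isotropy if whenever `x = αγ = βγ`
then `l(α) = l(β)`. -/
def TrivIso (x : PathSp G) : Prop :=
  ∀ α β : FinPath G,
    ((∃ (γ : FinPath G) (h₁ : γ.start = α.rngF) (h₂ : γ.start = β.rngF),
        x = .inl (α.concat γ h₁) ∧ x = .inl (β.concat γ h₂)) ∨
     (∃ (w : InfPath G) (h₁ : w.start = α.rngF) (h₂ : w.start = β.rngF),
        x = .inr (α.concatInf w h₁) ∧ x = .inr (β.concatInf w h₂))) →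
    α.len = β.len


section Aux

variable {G}

theorem FinPath.ext' {α β : FinPath G} (h1 : α.start = β.start)
    (h2 : α.edges = β.edges) : α = β := by
  cases α; cases β; simp_all

theorem InfPath.ext' {z w : InfPath G} (h : ∀ i, z.seq i = w.seq i) : z = w := by
  cases z; cases w
  simp only [InfPath.mk.injEq]
  exact funext h

theorem appendInfAux_seq (l : List G.Ed) (v : G.V) (hv : Valid G v l)
    (z : InfPath G) (h : z.start = rngTo G v l) (i : ℕ) :
    (appendInfAux G l v hv z h).1.seq i =
      if hi : i < l.length then l[i] else z.seq (i - l.length) := by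
  induction l generalizing v i with
  | nil => simp [appendInfAux]
  | cons e l ih =>
    cases i with
    | zero => simp [appendInfAux, consInf]
    | succ m =>
      show (appendInfAux G l (G.rng e) hv.2 z h).1.seq m = _
      refine (ih (G.rng e) _ h m).trans ?_
      rcases Nat.lt_or_ge m l.length with hm | hm
      · rw [dif_pos hm, dif_pos (by simpa using Nat.succ_lt_succ hm)]
        simp
      · rw [dif_neg (by omega), dif_neg (by simp; omega)]
        simp [Nat.succ_sub_succ]

theorem concatInf_seq (α : FinPath G) (w : InfPath G) (h : w.start = α.rngF)
    (i : ℕ) :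
    (α.concatInf w h).seq i =
      if hi : i < α.edges.length then α.edges[i]
      else w.seq (i - α.edges.length) :=
  appendInfAux_seq _ _ _ _ _ _

theorem concatInf_start (α : FinPath G) (w : InfPath G) (h : w.start = α.rngF) :
    (α.concatInf w h).start = α.start :=
  (appendInfAux G α.edges α.start α.valid w h).2

def Pref (α : FinPath G) (x : PathSp G) : Prop :=
  startOf G x = α.start ∧ ∀ i, i < α.edges.length → nthEdge G x i = α.edges[i]?

theorem pref_of_ext {α : FinPath G} {x : PathSp G} (h : Ext G α x) :
    Pref α x := by
  rcases h with ⟨β, hb, rfl⟩ | ⟨w, hw, rfl⟩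
  · exact ⟨rfl, fun i hi => by
      show (α.edges ++ β.edges)[i]? = α.edges[i]?
      rw [List.getElem?_append_left hi]⟩
  · refine ⟨concatInf_start α w hw, fun i hi => ?_⟩
    show some ((α.concatInf w hw).seq i) = _
    rw [concatInf_seq, dif_pos hi, List.getElem?_eq_getElem hi]

theorem src_seq_rngTo (z : InfPath G) (l : List G.Ed) :
    ∀ (v : G.V) (k : ℕ), Valid G v l →
      (∀ i, (hi : i < l.length) → z.seq (k + i) = l[i]) →
      G.src (z.seq k) = v → G.src (z.seq (k + l.length)) = rngTo G v l := by
  induction l with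
  | nil => intro v k _ _ h; simpa [rngTo] using h
  | cons e t ih =>
    intro v k hv hp h
    have h0 : z.seq k = e := by exact hp 0 (by simp)
    have h1 : G.src (z.seq (k + 1)) = G.rng e := by rw [z.valid k, h0]
    have h2 := ih (G.rng e) (k + 1) hv.2 (fun i hi => by
      have := hp (i + 1) (by simpa using Nat.succ_lt_succ hi)
      simpa [show k + (i + 1) = k + 1 + i by omega] using this) h1
    show G.src (z.seq (k + (t.length + 1))) = rngTo G (G.rng e) t
    rwa [show k + (t.length + 1) = (k + 1) + t.length by omega]

theorem ext_of_pref {α : FinPath G} {x : PathSp G} (h : Pref α x) :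
    Ext G α x := by
  obtain ⟨hs, he⟩ := h
  cases x with
  | inl γ =>
    left
    have hstart : γ.start = α.start := hs
    have hlen : α.edges.length ≤ γ.edges.length := by
      by_contra hl
      push_neg at hl
      have h1 : γ.edges[γ.edges.length]? = α.edges[γ.edges.length]? :=
        he γ.edges.length hl
      rw [List.getElem?_eq_none (le_refl _),
        List.getElem?_eq_getElem hl] at h1
      exact nomatch h1
    have hedges : γ.edges = α.edges ++ γ.edges.drop α.edges.length := by
      apply List.ext_getElem?
      intro i
      rcases Nat.lt_or_ge i α.edges.length with hi | hi
      · rw [List.getElem?_append_left hi]; exact he i hi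
      · rw [List.getElem?_append_right hi, List.getElem?_drop]
        congr 1; omega
    have hval := (valid_append G α.edges (γ.edges.drop α.edges.length)
      γ.start).mp (by rw [← hedges]; exact γ.valid)
    have hval2 : Valid G α.rngF (γ.edges.drop α.edges.length) := by
      have := hval.2; rw [hstart] at this; exact this
    refine ⟨⟨α.rngF, γ.edges.drop α.edges.length, hval2⟩, rfl, ?_⟩
    exact congrArg Sum.inl (FinPath.ext' hstart hedges)
  | inr z =>
    right
    have hseq : ∀ i, (hi : i < α.edges.length) → z.seq i = α.edges[i] := by
      intro i hi
      have := he i hi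
      rw [List.getElem?_eq_getElem hi] at this
      exact Option.some.inj this
    have hstart : G.src (z.seq 0) = α.start := hs
    have hr : G.src (z.seq α.edges.length) = α.rngF := by
      have := src_seq_rngTo z α.edges α.start 0 α.valid
        (fun i hi => by simpa using hseq i hi) hstart
      simpa [FinPath.rngF] using this
    have wv : ∀ i, G.src (z.seq (α.edges.length + (i + 1))) =
        G.rng (z.seq (α.edges.length + i)) := fun i => by
      have := z.valid (α.edges.length + i)
      rwa [show α.edges.length + (i + 1) = (α.edges.length + i) + 1 by omega]
    refine ⟨⟨fun i => z.seq (α.edges.length + i), wv⟩,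
      by simpa [InfPath.start] using hr, ?_⟩
    refine congrArg Sum.inr (InfPath.ext' fun i => ?_)
    rw [concatInf_seq]
    rcases Nat.lt_or_ge i α.edges.length with hi | hi
    · rw [dif_pos hi]; exact hseq i hi
    · rw [dif_neg (by omega)]
      show z.seq i = z.seq (α.edges.length + (i - α.edges.length))
      congr 1; omega

theorem ext_iff_pref {α : FinPath G} {x : PathSp G} :
    Ext G α x ↔ Pref α x := ⟨pref_of_ext, ext_of_pref⟩

theorem len_le_of_pref {α γ : FinPath G} (h : Pref α (.inl γ)) :
    α.edges.length ≤ γ.edges.length := by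
  by_contra hl
  push_neg at hl
  have h1 : γ.edges[γ.edges.length]? = α.edges[γ.edges.length]? :=
    h.2 γ.edges.length hl
  rw [List.getElem?_eq_none (le_refl _), List.getElem?_eq_getElem hl] at h1
  exact nomatch h1

theorem pref_trans {α τ : FinPath G} {u : PathSp G}
    (h1 : Pref α (.inl τ)) (h2 : Pref τ u) : Pref α u := by
  refine ⟨h2.1.trans h1.1, fun i hi => ?_⟩
  have hlen := len_le_of_pref h1
  rw [h2.2 i (lt_of_lt_of_le hi hlen)]
  exact h1.2 i hi

theorem pref_pref {α γ : FinPath G} {u : PathSp G}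
    (h1 : Pref α u) (h2 : Pref γ u) (hl : α.edges.length ≤ γ.edges.length) :
    Pref α (.inl γ) := by
  refine ⟨h2.1.symm.trans h1.1, fun i hi => ?_⟩
  show γ.edges[i]? = α.edges[i]?
  rw [← h2.2 i (lt_of_lt_of_le hi hl)]
  exact h1.2 i hi


theorem valid_ofFn (z : InfPath G) :
    ∀ (m k : ℕ), Valid G (G.src (z.seq k))
      (List.ofFn fun i : Fin m => z.seq (k + i)) := by
  intro m
  induction m with
  | zero => intro k; trivial
  | succ m ih =>
    intro k
    rw [List.ofFn_succ]
    simp only [Fin.val_zero, Fin.val_succ, Nat.add_zero]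
    refine ⟨rfl, ?_⟩
    have heq : (fun i : Fin m => z.seq (k + (↑i + 1))) =
        fun i : Fin m => z.seq ((k + 1) + ↑i) := by
      funext i; congr 1; omega
    have hr : G.rng (z.seq k) = G.src (z.seq (k + 1)) := (z.valid k).symm
    rw [hr, heq]
    exact ih (k + 1)

theorem rngTo_ofFn (z : InfPath G) :
    ∀ (m k : ℕ), rngTo G (G.src (z.seq k))
      (List.ofFn fun i : Fin m => z.seq (k + i)) = G.src (z.seq (k + m)) := by
  intro m
  induction m with
  | zero => intro k; simp [rngTo]
  | succ m ih =>
    intro k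
    rw [List.ofFn_succ]
    simp only [Fin.val_zero, Fin.val_succ, Nat.add_zero]
    have heq : (fun i : Fin m => z.seq (k + (↑i + 1))) =
        fun i : Fin m => z.seq ((k + 1) + ↑i) := by
      funext i; congr 1; omega
    show rngTo G (G.rng (z.seq k)) _ = _
    rw [heq, show G.rng (z.seq k) = G.src (z.seq (k + 1)) from (z.valid k).symm,
      ih (k + 1), show k + 1 + m = k + (m + 1) from by omega]

/-- The finite path consisting of the first `m` edges of `z`. -/
def takeInf (z : InfPath G) (m : ℕ) : FinPath G :=
  ⟨z.start, List.ofFn fun i : Fin m => z.seq i, by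
    have := valid_ofFn z m 0
    simpa [InfPath.start] using this⟩

theorem takeInf_rngF (z : InfPath G) (m : ℕ) :
    (takeInf z m).rngF = G.src (z.seq m) := by
  show rngTo G z.start _ = _
  have := rngTo_ofFn z m 0
  simpa [InfPath.start, takeInf] using this

theorem takeInf_len (z : InfPath G) (m : ℕ) :
    (takeInf z m).edges.length = m := by simp [takeInf]

theorem takeInf_getElem? (z : InfPath G) (m i : ℕ) (hi : i < m) :
    (takeInf z m).edges[i]? = some (z.seq i) := by
  simp [takeInf, List.getElem?_ofFn, hi]

/-- Bound for list maxima of lengths. -/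
theorem le_foldr_max (L : List (FinPath G)) (β : FinPath G) (hβ : β ∈ L) :
    β.edges.length ≤ L.foldr (fun p m => max p.edges.length m) 0 := by
  induction L with
  | nil => cases hβ
  | cons a t ih =>
    rcases List.mem_cons.mp hβ with rfl | h
    · exact le_max_left _ _
    · exact le_trans (ih h) (le_max_right _ _)

/-- Any open set of the path topology is, around each of its points, a finite
intersection of basic sets and complements of basic sets. -/
theorem open_aux {O : Set (PathSp G)} (hO : @IsOpen _ (pathTop G) O) :
    ∀ x ∈ O, ∃ L M : List (FinPath G),
      (∀ β ∈ L, Ext G β x) ∧ (∀ β ∈ M, ¬ Ext G β x) ∧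
      ∀ u, (∀ β ∈ L, Ext G β u) → (∀ β ∈ M, ¬ Ext G β u) → u ∈ O := by
  have hO' : TopologicalSpace.GenerateOpen
      (Set.range (Dset G) ∪ Set.range fun α => (Dset G α)ᶜ) O := hO
  clear hO
  induction hO' with
  | basic s hs =>
    rcases hs with ⟨α, rfl⟩ | ⟨α, rfl⟩
    · intro x hx
      exact ⟨[α], [], by simpa [Dset] using hx, by simp,
        fun u hu _ => hu α (by simp)⟩
    · intro x hx
      exact ⟨[], [α], by simp, by simpa [Dset] using hx,
        fun u _ hu => hu α (by simp)⟩
  | univ => exact fun x _ => ⟨[], [], by simp, by simp, fun u _ _ => trivial⟩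
  | inter s t hs ht ihs iht =>
    intro x hx
    obtain ⟨L₁, M₁, hL₁, hM₁, hc₁⟩ := ihs x hx.1
    obtain ⟨L₂, M₂, hL₂, hM₂, hc₂⟩ := iht x hx.2
    refine ⟨L₁ ++ L₂, M₁ ++ M₂, ?_, ?_, ?_⟩
    · intro β hβ
      rcases List.mem_append.mp hβ with h | h
      exacts [hL₁ β h, hL₂ β h]
    · intro β hβ
      rcases List.mem_append.mp hβ with h | h
      exacts [hM₁ β h, hM₂ β h]
    · intro u h1 h2
      exact ⟨hc₁ u (fun β hβ => h1 β (List.mem_append_left _ hβ))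
          (fun β hβ => h2 β (List.mem_append_left _ hβ)),
        hc₂ u (fun β hβ => h1 β (List.mem_append_right _ hβ))
          (fun β hβ => h2 β (List.mem_append_right _ hβ))⟩
  | sUnion S hS ih =>
    intro x hx
    obtain ⟨s, hsS, hxs⟩ := hx
    obtain ⟨L, M, hL, hM, hc⟩ := ih s hsS x hxs
    exact ⟨L, M, hL, hM, fun u h1 h2 => ⟨s, hsS, hc u h1 h2⟩⟩

/-- Shrinking a basic neighborhood of a point of `X` to a single `D_τ`. -/
theorem shrink {x : PathSp G} (hx : memX G x) (L M : List (FinPath G))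
    (hL : ∀ β ∈ L, Ext G β x) (hM : ∀ β ∈ M, ¬ Ext G β x) :
    ∃ τ : FinPath G, ∀ u, Ext G τ u →
      (∀ β ∈ L, Ext G β u) ∧ (∀ β ∈ M, ¬ Ext G β u) := by
  cases x with
  | inl α =>
    have hVinf : Vinf G α.rngF := hx
    set n := α.edges.length with hn
    have hfin : {e : G.Ed | ∃ β ∈ M, β.edges[n]? = some e}.Finite := by
      apply Set.Finite.subset (List.finite_toSet
        (M.filterMap fun β => β.edges[n]?))
      rintro e ⟨β, hβ, he⟩
      simp only [List.coe_toFinset, Set.mem_setOf_eq, List.mem_filterMap]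
      exact ⟨β, hβ, he⟩
    obtain ⟨e, he1, he2⟩ := (hVinf.diff hfin).nonempty
    have hsrc : G.src e = α.rngF := he1
    refine ⟨α.concat (FinPath.ep e) hsrc, ?_⟩
    intro u hu
    have hτu : Pref (α.concat (FinPath.ep e) hsrc) u := pref_of_ext hu
    have hατ : Pref α (.inl (α.concat (FinPath.ep e) hsrc)) :=
      pref_of_ext (Or.inl ⟨FinPath.ep e, hsrc, rfl⟩)
    have hτlen : (α.concat (FinPath.ep e) hsrc).edges.length = n + 1 := by
      show (α.edges ++ [e]).length = n + 1
      simp [hn]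
    have hτn : (α.concat (FinPath.ep e) hsrc).edges[n]? = some e := by
      show (α.edges ++ [e])[n]? = some e
      rw [List.getElem?_append_right (le_refl _)]
      simp
    constructor
    · intro β hβ
      have hβα : Pref β (.inl α) := pref_of_ext (hL β hβ)
      exact ext_of_pref (pref_trans (pref_trans hβα hατ) hτu)
    · intro β hβ hβu
      have hβu' : Pref β u := pref_of_ext hβu
      rcases le_or_gt β.edges.length n with hl | hl
      · apply hM β hβ
        apply ext_of_pref
        refine ⟨?_, fun i hi => ?_⟩
        · show α.start = β.start
          have h1 : startOf G u = β.start := hβu'.1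
          have h2 : startOf G u = (α.concat (FinPath.ep e) hsrc).start :=
            hτu.1
          exact (h2.symm.trans h1)
        · show α.edges[i]? = β.edges[i]?
          have h1 : nthEdge G u i = β.edges[i]? := hβu'.2 i hi
          have h2 : nthEdge G u i =
              (α.concat (FinPath.ep e) hsrc).edges[i]? :=
            hτu.2 i (by omega)
          have h3 : (α.concat (FinPath.ep e) hsrc).edges[i]? =
              α.edges[i]? := by
            show (α.edges ++ [e])[i]? = α.edges[i]?
            exact List.getElem?_append_left (by omega)
          rw [← h3, ← h2, h1]
      · apply he2
        refine ⟨β, hβ, ?_⟩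
        have h1 : nthEdge G u n = β.edges[n]? := hβu'.2 n hl
        have h2 : nthEdge G u n =
            (α.concat (FinPath.ep e) hsrc).edges[n]? :=
          hτu.2 n (by omega)
        rw [← h1, h2, hτn]
  | inr z =>
    set n := (L ++ M).foldr (fun p m => max p.edges.length m) 0 with hn
    refine ⟨takeInf z n, ?_⟩
    intro u hu
    have hτu : Pref (takeInf z n) u := pref_of_ext hu
    have hτz : ∀ i, i < n → (takeInf z n).edges[i]? = nthEdge G (.inr z) i :=
      fun i hi => takeInf_getElem? z n i hi
    constructor
    · intro β hβ
      have hβz : Pref β (.inr z) := pref_of_ext (hL β hβ)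
      have hβn : β.edges.length ≤ n :=
        le_foldr_max _ β (List.mem_append_left _ hβ)
      refine ext_of_pref (pref_trans ?_ hτu)
      refine ⟨hβz.1, fun i hi => ?_⟩
      show (takeInf z n).edges[i]? = β.edges[i]?
      rw [hτz i (by omega)]
      exact hβz.2 i hi
    · intro β hβ hβu
      have hβu' : Pref β u := pref_of_ext hβu
      have hβn : β.edges.length ≤ n :=
        le_foldr_max _ β (List.mem_append_right _ hβ)
      have hβτ : Pref β (.inl (takeInf z n)) :=
        pref_pref hβu' hτu (by rw [takeInf_len]; exact hβn)
      apply hM β hβ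
      apply ext_of_pref
      refine ⟨hβτ.1, fun i hi => ?_⟩
      rw [← hτz i (by omega)]
      exact hβτ.2 i hi



theorem concat_vp {α : FinPath G} {v : G.V} (h : (FinPath.vp v).start = α.rngF) :
    α.concat (FinPath.vp v) h = α :=
  FinPath.ext' rfl (List.append_nil _)

end Aux

/-- Assume `E` is cofinal and that every vertex reaches every vertex
of `V_∞`. Then the path groupoid is minimal: the only nonempty open invariant subset of
`X` is `X` itself. -/
theorem path_groupoid_minimal (G : Graph) [Countable G.V] [Countable G.Ed]
    (hns : ∀ v : G.V, ∃ e : G.Ed, G.src e = v)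
    (hcof : ∀ (v : G.V) (z : InfPath G), ∃ n : ℕ, Reach G v (G.rng (z.seq n)))
    (hinf : ∀ v w : G.V, Vinf G w → Reach G v w) :
    ∀ U : Set (PathSp G), U ⊆ Xset G →
      (∃ O : Set (PathSp G), @IsOpen (PathSp G) (pathTop G) O ∧ U = O ∩ Xset G) →
      U.Nonempty → InvariantS G U → U = Xset G := by
  intro U hUX hOex hne hInv
  obtain ⟨O, hOopen, hUO⟩ := hOex
  obtain ⟨x, hxU⟩ := hne
  apply Set.Subset.antisymm hUX
  intro y hy
  have hxO : x ∈ O := by rw [hUO] at hxU; exact hxU.1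
  have hxX : memX G x := hUX hxU
  obtain ⟨L, M, hL, hM, hcl⟩ := open_aux hOopen x hxO
  obtain ⟨τ, hτ⟩ := shrink hxX L M hL hM
  have hU : ∀ u, Ext G τ u → memX G u → u ∈ U := by
    intro u hu hXu
    rw [hUO]
    exact ⟨hcl u (hτ u hu).1 (hτ u hu).2, hXu⟩
  cases y with
  | inl δ =>
    have hyV : Vinf G δ.rngF := hy
    obtain ⟨μ, hμs, hμr⟩ := hinf τ.rngF δ.rngF hyV
    have huU : (.inl (τ.concat μ hμs) : PathSp G) ∈ U := by
      apply hU
      · exact Or.inl ⟨μ, hμs, rfl⟩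
      · show Vinf G (τ.concat μ hμs).rngF
        rw [FinPath.rngF_concat, hμr]
        exact hyV
    apply hInv _ huU
    left
    have h₁ : (FinPath.vp δ.rngF).start = (τ.concat μ hμs).rngF := by
      show δ.rngF = _
      rw [FinPath.rngF_concat, hμr]
    have h₂ : (FinPath.vp δ.rngF).start = δ.rngF := rfl
    exact ⟨τ.concat μ hμs, δ, FinPath.vp δ.rngF, h₁, h₂,
      congrArg Sum.inl (concat_vp h₁).symm,
      congrArg Sum.inl (concat_vp h₂).symm⟩
  | inr z =>
    obtain ⟨n, hre⟩ := hcof τ.rngF z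
    obtain ⟨μ, hμs, hμr⟩ := hre
    have wv : ∀ i, G.src (z.seq (n + 1 + (i + 1))) = G.rng (z.seq (n + 1 + i)) :=
      fun i => by
        have := z.valid (n + 1 + i)
        rwa [show n + 1 + (i + 1) = (n + 1 + i) + 1 from by omega]
    set w : InfPath G := ⟨fun i => z.seq (n + 1 + i), wv⟩ with hwdef
    have hws : w.start = G.rng (z.seq n) := by
      show G.src (z.seq (n + 1 + 0)) = _
      rw [Nat.add_zero]
      exact z.valid n
    have h₁ : w.start = (τ.concat μ hμs).rngF := by
      rw [FinPath.rngF_concat, hμr]; exact hws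
    have h₂ : w.start = (takeInf z (n + 1)).rngF := by
      rw [takeInf_rngF]
      show G.src (z.seq (n + 1 + 0)) = _
      rw [Nat.add_zero]
    have hzdec : (Sum.inr z : PathSp G) =
        .inr ((takeInf z (n + 1)).concatInf w h₂) := by
      refine congrArg Sum.inr (InfPath.ext' fun i => ?_)
      rw [concatInf_seq]
      rcases Nat.lt_or_ge i (takeInf z (n + 1)).edges.length with hi | hi
      · rw [dif_pos hi]
        have h3 := takeInf_getElem? z (n + 1) i (by rwa [takeInf_len] at hi)
        rw [List.getElem?_eq_getElem hi] at h3
        exact (Option.some.inj h3).symm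
      · rw [dif_neg (by omega)]
        show z.seq i = z.seq (n + 1 + (i - (takeInf z (n + 1)).edges.length))
        rw [takeInf_len] at hi ⊢
        congr 1; omega
    have huU : (.inr ((τ.concat μ hμs).concatInf w h₁) : PathSp G) ∈ U := by
      apply hU
      · exact ext_of_pref (pref_trans (pref_of_ext (Or.inl ⟨μ, hμs, rfl⟩))
          (pref_of_ext (Or.inr ⟨w, h₁, rfl⟩)))
      · trivial
    apply hInv _ huU
    right
    exact ⟨τ.concat μ hμs, takeInf z (n + 1), w, h₁, h₂, rfl, hzdec⟩

end GraphCstar
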